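/- Let F=F(A,B) be a bipartite graph in which every vertex u ∈ A satisfies deg(u;B) ≥ δ|B|. Suppose Y ⊆ B satisfies (δ(1+η/2)−2γ)(1−η)|B| < |Y| ≤ (δ(1+η/2)−2γ)|B|, and X ⊆ A is such that every u ∈ X has at most 2γ|B| neighbors in B−Y. If 0 < η ≤ 1/6 and 0 < γ ≤ min{η/4, δ/20}, then for every u ∈ X and every Y' ⊆ Y with |Y'| = η|Y| we have deg(u;Y') ≥ γ|Y'|; consequently F[X,Y] is a lower (ε,η,γ)-regular pair for every ε > 0. -/
import Mathlib


open Finset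

/-- Number of edges between `X` and `Y` for a bipartite adjacency relation `E`. -/
def eCount {α β : Type*} (E : α → β → Prop) [∀ a b, Decidable (E a b)]
    (X : Finset α) (Y : Finset β) : ℕ :=
  ((X ×ˢ Y).filter fun p => E p.1 p.2).card

/-- Number of neighbors of `u` inside `S`. -/
def degIn {α β : Type*} (E : α → β → Prop) [∀ a b, Decidable (E a b)]
    (u : α) (S : Finset β) : ℕ :=
  (S.filter fun y => E u y).card

/-- `(X, Y)` is a lower `(ε, η, γ)`-regular pair. -/
def LowerRegular {α β : Type*} (E : α → β → Prop) [∀ a b, Decidable (E a b)]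
    (ε η γ : ℝ) (X : Finset α) (Y : Finset β) : Prop :=
  ∀ X' ⊆ X, ∀ Y' ⊆ Y, ε * X.card ≤ X'.card → η * Y.card ≤ Y'.card →
    γ * X'.card * Y'.card ≤ eCount E X' Y'

lemma degIn_split {α β : Type*} [DecidableEq β] (E : α → β → Prop)
    [∀ a b, Decidable (E a b)] (u : α) {Y B : Finset β} (h : Y ⊆ B) :
    degIn E u B = degIn E u Y + degIn E u (B \ Y) := by
  unfold degIn
  rw [← Finset.card_union_of_disjoint
    (Finset.disjoint_filter_filter Finset.disjoint_sdiff),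
    ← Finset.filter_union, Finset.union_sdiff_of_subset h]

lemma eCount_eq_sum {α β : Type*} (E : α → β → Prop) [∀ a b, Decidable (E a b)]
    (X : Finset α) (Y : Finset β) :
    eCount E X Y = ∑ u ∈ X, degIn E u Y := by
  rw [eCount, Finset.card_filter, Finset.sum_product]
  refine Finset.sum_congr rfl fun u _ => ?_
  rw [degIn, Finset.card_filter]

set_option maxHeartbeats 1000000 in
/-- The stopping-rule analysis: once `|Y|` has shrunk into the critical window and every
vertex of `X` has few neighbors outside `Y`, the pair `F[X, Y]` is lower regular. -/
theorem stopping_rule_lower_regular {α β : Type*} [DecidableEq β] (E : α → β → Prop)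
    [∀ a b, Decidable (E a b)] (A : Finset α) (B : Finset β)
    (δ η γ : ℝ)
    (hdeg : ∀ u ∈ A, δ * (B.card : ℝ) ≤ (degIn E u B : ℝ))
    (X : Finset α) (Y : Finset β) (hXA : X ⊆ A) (hYB : Y ⊆ B)
    (hYlow : (δ * (1 + η / 2) - 2 * γ) * (1 - η) * (B.card : ℝ) < (Y.card : ℝ))
    (hYhigh : (Y.card : ℝ) ≤ (δ * (1 + η / 2) - 2 * γ) * (B.card : ℝ))
    (hout : ∀ u ∈ X, (degIn E u (B \ Y) : ℝ) ≤ 2 * γ * (B.card : ℝ))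
    (hη₀ : 0 < η) (hη₁ : η ≤ 1 / 6)
    (hγ₀ : 0 < γ) (hγ₁ : γ ≤ min (η / 4) (δ / 20)) :
    (∀ u ∈ X, ∀ Y' ⊆ Y, (Y'.card : ℝ) = η * (Y.card : ℝ) →
        γ * (Y'.card : ℝ) ≤ (degIn E u Y' : ℝ)) ∧
    ∀ ε : ℝ, 0 < ε → LowerRegular E ε η γ X Y := by
  have hγη : γ ≤ η / 4 := (le_min_iff.mp hγ₁).1
  have hγδ : γ ≤ δ / 20 := (le_min_iff.mp hγ₁).2
  have hδ : 20 * γ ≤ δ := by linarith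
  have hB0 : (0 : ℝ) ≤ (B.card : ℝ) := Nat.cast_nonneg _
  -- key estimate: every u ∈ X has many neighbors in Y
  have hstar : ∀ u ∈ X, (1 - η + γ * η) * (Y.card : ℝ) ≤ (degIn E u Y : ℝ) := by
    intro u hu
    have hb := hdeg u (hXA hu)
    have hsplit : (degIn E u B : ℝ) = (degIn E u Y : ℝ) + (degIn E u (B \ Y) : ℝ) := by
      rw [degIn_split E u hYB]; push_cast; ring
    have ho := hout u hu
    have hY : (degIn E u Y : ℝ) ≥ (δ - 2 * γ) * (B.card : ℝ) := by linarith
    -- (1-η+γη)(δ(1+η/2)-2γ) ≤ δ - 2γ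
    have hδ0 : 0 < δ := by linarith
    have hγ24 : γ ≤ 1 / 24 := by linarith
    have h1 : γ * δ ≤ δ / 24 := by nlinarith
    have h2 : γ * δ * η ≤ δ / 144 := by nlinarith
    have key : 0 ≤ δ / 2 + δ * η / 2 - 2 * γ + 2 * γ ^ 2 - γ * δ - γ * δ * η / 2 := by
      nlinarith [sq_nonneg γ, mul_nonneg hδ0.le hη₀.le]
    have hcoef : (1 - η + γ * η) * (δ * (1 + η / 2) - 2 * γ) ≤ δ - 2 * γ := by
      nlinarith [mul_nonneg hη₀.le key]
    have hpos : (0 : ℝ) ≤ 1 - η + γ * η := by nlinarith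
    calc (1 - η + γ * η) * (Y.card : ℝ)
        ≤ (1 - η + γ * η) * ((δ * (1 + η / 2) - 2 * γ) * (B.card : ℝ)) :=
          mul_le_mul_of_nonneg_left hYhigh hpos
      _ = ((1 - η + γ * η) * (δ * (1 + η / 2) - 2 * γ)) * (B.card : ℝ) := by ring
      _ ≤ (δ - 2 * γ) * (B.card : ℝ) := mul_le_mul_of_nonneg_right hcoef hB0
      _ ≤ (degIn E u Y : ℝ) := hY
  -- main step: enough neighbors in any large Y'
  have hmain : ∀ u ∈ X, ∀ Y' ⊆ Y, η * (Y.card : ℝ) ≤ (Y'.card : ℝ) →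
      γ * (Y'.card : ℝ) ≤ (degIn E u Y' : ℝ) := by
    intro u hu Y' hY' hcard
    have hs := degIn_split E u hY'
    have hle : degIn E u (Y \ Y') ≤ (Y \ Y').card := Finset.card_filter_le _ _
    have hsd : (Y \ Y').card = Y.card - Y'.card := Finset.card_sdiff_of_subset hY'
    have hYY' : Y'.card ≤ Y.card := Finset.card_le_card hY'
    have h1 : (degIn E u Y : ℝ) ≤ (degIn E u Y' : ℝ) + ((Y.card : ℝ) - (Y'.card : ℝ)) := by
      have : (degIn E u (Y \ Y') : ℝ) ≤ (Y.card : ℝ) - (Y'.card : ℝ) := by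
        rw [show ((Y.card : ℝ) - (Y'.card : ℝ)) = ((Y.card - Y'.card : ℕ) : ℝ) by
          push_cast [hYY']; ring]
        exact_mod_cast hsd ▸ hle
      rw [hs]; push_cast; linarith
    have h2 := hstar u hu
    have hγ1 : γ ≤ 1 := by linarith
    have h3 : (0:ℝ) ≤ 1 - γ := by linarith
    have h4 := mul_le_mul_of_nonneg_left hcard h3
    nlinarith [h4]
  refine ⟨fun u hu Y' hY' hc => hmain u hu Y' hY' (le_of_eq hc.symm), ?_⟩
  intro ε hε X' hX' Y' hY' _ hYc
  rw [eCount_eq_sum]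
  have : γ * (X'.card : ℝ) * (Y'.card : ℝ) = ∑ _u ∈ X', γ * (Y'.card : ℝ) := by
    rw [Finset.sum_const, nsmul_eq_mul]; ring
  rw [this]
  push_cast
  exact Finset.sum_le_sum fun u hu => hmain u (hX' hu) Y' hY' hYc
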